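/- Let f be a surjective isometry of the 1-Wasserstein space over a countable discrete metric space X. Then f maps Dirac measures to Dirac measures bijectively; i.e., there is a bijection σ : X → X with f(δ_x) = δ_{σ(x)} for all x ∈ X. -/

import Mathlib

open scoped ENNReal

namespace Wass7Aux

variable {X : Type*} [Countable X] [DecidableEq X]

/-- Dirac measure at `x`. -/
noncomputable def d (x : X) : X → ℝ≥0∞ := fun y => if y = x then 1 else 0

/-- Overlap (sum of pointwise minima). -/
noncomputable def Sm (μ ν : X → ℝ≥0∞) : ℝ≥0∞ := ∑' x, min (μ x) (ν x)

lemma d_sum (x : X) : ∑' y, d x y = 1 := tsum_ite_eq x 1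

lemma Sm_comm (μ ν : X → ℝ≥0∞) : Sm μ ν = Sm ν μ :=
  tsum_congr fun x => min_comm _ _

lemma Sm_le_one {μ : X → ℝ≥0∞} (hμ : ∑' x, μ x = 1) (ν : X → ℝ≥0∞) : Sm μ ν ≤ 1 := by
  calc Sm μ ν ≤ ∑' x, μ x := ENNReal.tsum_le_tsum fun x => min_le_left _ _
    _ = 1 := hμ

lemma Sm_d_zero_iff (x : X) (ρ : X → ℝ≥0∞) : Sm (d x) ρ = 0 ↔ ρ x = 0 := by
  rw [Sm, ENNReal.tsum_eq_zero]
  constructor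
  · intro h
    have h1 := h x
    simp only [d, if_pos rfl] at h1
    rcases min_eq_iff.mp h1 with ⟨ha, _⟩ | ⟨hb, _⟩
    · exact absurd ha one_ne_zero
    · exact hb
  · intro h y
    by_cases hy : y = x
    · subst hy; simp [d, h]
    · simp [d, hy]

lemma d_ne (x y : X) (h : y ≠ x) : Sm (d x) (d y) = 0 := by
  rw [Sm_d_zero_iff]
  simp only [d]
  rw [if_neg (fun h' => h h'.symm)]

lemma d_inj {x y : X} (h : d x = d y) : x = y := by
  by_contra hxy
  have := congrFun h x
  simp [d, hxy] at this

/-- Maximality property characterizing Dirac measures. -/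
def Dmax (μ : X → ℝ≥0∞) : Prop :=
  ∀ ν : X → ℝ≥0∞, (∑' x, ν x = 1) →
    (∀ ρ : X → ℝ≥0∞, (∑' x, ρ x = 1) → Sm μ ρ = 0 → Sm ν ρ = 0) →
    (∀ ρ : X → ℝ≥0∞, (∑' x, ρ x = 1) → Sm ν ρ = 0 → Sm μ ρ = 0)

lemma dirac_Dmax (x : X) : Dmax (d x) := by
  intro ν hν hsub ρ hρ hνρ
  -- first, ν is concentrated at x
  have hνy : ∀ y, y ≠ x → ν y = 0 := by
    intro y hy
    have h0 : Sm ν (d y) = 0 := hsub (d y) (d_sum y) (d_ne x y hy)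
    rw [Sm_comm, Sm_d_zero_iff] at h0
    exact h0
  have hνx : ν x = 1 := by
    have : ∑' y, ν y = ν x := tsum_eq_single x hνy
    rw [hν] at this; exact this.symm
  -- then ρ x = 0
  have hmin : min (ν x) (ρ x) = 0 := by
    have := ENNReal.tsum_eq_zero.mp hνρ x
    exact this
  rw [hνx] at hmin
  have hρx : ρ x = 0 := by
    rcases min_eq_iff.mp hmin with ⟨h1, _⟩ | ⟨h2, _⟩
    · exact absurd h1 one_ne_zero
    · exact h2
  rw [Sm_d_zero_iff]
  exact hρx

lemma Dmax_dirac {μ : X → ℝ≥0∞} (hμ : ∑' x, μ x = 1) (hD : Dmax μ) : ∃ x, μ = d x := by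
  have hx : ∃ x, μ x ≠ 0 := by
    by_contra h
    push_neg at h
    have : (∑' x, μ x) = 0 := by simp [h]
    rw [hμ] at this
    exact one_ne_zero this
  obtain ⟨x, hx⟩ := hx
  have h1 : ∀ ρ : X → ℝ≥0∞, (∑' y, ρ y = 1) → Sm μ ρ = 0 → Sm (d x) ρ = 0 := by
    intro ρ _ h0
    have := ENNReal.tsum_eq_zero.mp h0 x
    rcases min_eq_iff.mp this with ⟨ha, _⟩ | ⟨hb, _⟩
    · exact absurd ha hx
    · rw [Sm_d_zero_iff]; exact hb
  have h2 := hD (d x) (d_sum x) h1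
  have hμy : ∀ y, y ≠ x → μ y = 0 := by
    intro y hy
    have h0 : Sm μ (d y) = 0 := h2 (d y) (d_sum y) (d_ne x y hy)
    rw [Sm_comm, Sm_d_zero_iff] at h0
    exact h0
  have hμx : μ x = 1 := by
    have : ∑' y, μ y = μ x := tsum_eq_single x hμy
    rw [hμ] at this; exact this.symm
  refine ⟨x, funext fun y => ?_⟩
  by_cases hy : y = x
  · subst hy; simp [d, hμx]
  · simp [d, hy, hμy y hy]

end Wass7Aux

/-- A surjective isometry f of the 1-Wasserstein space over a countable discrete
metric space X (|X| ≥ 2) maps Dirac measures to Dirac measures bijectively: there is a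
bijection σ of X with f(δ_x) = δ_{σ x} for all x. -/
theorem isometry_maps_diracs_to_diracs {X : Type*} [Countable X] [DecidableEq X] [Nontrivial X]
    (f : (X → ℝ≥0∞) → (X → ℝ≥0∞))
    (hbij : Set.BijOn f {μ | ∑' x, μ x = 1} {μ | ∑' x, μ x = 1})
    (hiso : ∀ μ ν : X → ℝ≥0∞, (∑' x, μ x = 1) → (∑' x, ν x = 1) →
      1 - ∑' x, min (f μ x) (f ν x) = 1 - ∑' x, min (μ x) (ν x)) :
    ∃ σ : Equiv.Perm X, ∀ x : X,
      f (fun y => if y = x then 1 else 0) = fun y => if y = σ x then 1 else 0 := by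
  open Wass7Aux in
  have hmaps : ∀ μ : X → ℝ≥0∞, (∑' x, μ x = 1) → (∑' x, f μ x = 1) := fun μ hμ =>
    hbij.mapsTo hμ
  have hpres : ∀ μ ν : X → ℝ≥0∞, (∑' x, μ x = 1) → (∑' x, ν x = 1) →
      Sm (f μ) (f ν) = Sm μ ν := by
    intro μ ν hμ hν
    have h : 1 - Sm (f μ) (f ν) = 1 - Sm μ ν := hiso μ ν hμ hν
    have h1 : Sm (f μ) (f ν) ≤ 1 := Wass7Aux.Sm_le_one (hmaps μ hμ) _
    have h2 : Sm μ ν ≤ 1 := Wass7Aux.Sm_le_one hμ _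
    calc Sm (f μ) (f ν) = 1 - (1 - Sm (f μ) (f ν)) :=
          (ENNReal.sub_sub_cancel ENNReal.one_ne_top h1).symm
      _ = 1 - (1 - Sm μ ν) := by rw [h]
      _ = Sm μ ν := ENNReal.sub_sub_cancel ENNReal.one_ne_top h2
  have hDtrans : ∀ μ : X → ℝ≥0∞, (∑' x, μ x = 1) → (Dmax μ ↔ Dmax (f μ)) := by
    intro μ hμ
    constructor
    · intro hD ν' hν' hsub ρ' hρ' hν'ρ'
      obtain ⟨ν, hν, rfl⟩ := hbij.surjOn hν'
      obtain ⟨ρ, hρ, rfl⟩ := hbij.surjOn hρ'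
      have hνρ : Sm ν ρ = 0 := by rw [← hpres ν ρ hν hρ]; exact hν'ρ'
      have hAsub : ∀ τ : X → ℝ≥0∞, (∑' x, τ x = 1) → Sm μ τ = 0 → Sm ν τ = 0 := by
        intro τ hτ h0
        have := hsub (f τ) (hmaps τ hτ) (by rw [hpres μ τ hμ hτ]; exact h0)
        rw [hpres ν τ hν hτ] at this
        exact this
      have := hD ν hν hAsub ρ hρ hνρ
      rw [← hpres μ ρ hμ hρ] at this
      exact this
    · intro hD ν hν hsub ρ hρ hνρ
      have hAsub' : ∀ τ' : X → ℝ≥0∞, (∑' x, τ' x = 1) → Sm (f μ) τ' = 0 → Sm (f ν) τ' = 0 := by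
        intro τ' hτ' h0
        obtain ⟨τ, hτ, rfl⟩ := hbij.surjOn hτ'
        rw [hpres μ τ hμ hτ] at h0
        rw [hpres ν τ hν hτ]
        exact hsub τ hτ h0
      have := hD (f ν) (hmaps ν hν) hAsub' (f ρ) (hmaps ρ hρ)
        (by rw [hpres ν ρ hν hρ]; exact hνρ)
      rw [hpres μ ρ hμ hρ] at this
      exact this
  -- f maps Diracs to Diracs
  have hdir : ∀ x : X, ∃ y : X, f (d x) = d y := by
    intro x
    have hfP : ∑' z, f (d x) z = 1 := hmaps (d x) (d_sum x)
    have hfD : Dmax (f (d x)) := (hDtrans (d x) (d_sum x)).mp (dirac_Dmax x)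
    exact Dmax_dirac hfP hfD
  choose σ₀ hσ₀ using hdir
  have hinj : Function.Injective σ₀ := by
    intro a b hab
    have h1 : f (d a) = f (d b) := by rw [hσ₀ a, hσ₀ b, hab]
    have := hbij.injOn (d_sum a) (d_sum b) h1
    exact d_inj this
  have hsurj : Function.Surjective σ₀ := by
    intro y
    obtain ⟨μ, hμ, hfμ⟩ := hbij.surjOn (d_sum y : (d y : X → ℝ≥0∞) ∈ _)
    have hμP : ∑' x, μ x = 1 := hμ
    have hDμ : Dmax μ := by
      rw [hDtrans μ hμP, hfμ]
      exact dirac_Dmax y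
    obtain ⟨x, rfl⟩ := Dmax_dirac hμP hDμ
    refine ⟨x, ?_⟩
    have : d (σ₀ x) = d y := by rw [← hσ₀ x, hfμ]
    exact d_inj this
  exact ⟨Equiv.ofBijective σ₀ ⟨hinj, hsurj⟩, fun x => hσ₀ x⟩
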